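/- For the root system D_n with positive roots Φ⁺ = {ε_j ± ε_i : 1 ≤ i < j ≤ n}, ρ = ∑_{i=2}^n (i-1)ε_i, and weight λ_s = ∑_{i=1}^s (i-1)k·ε_i + ∑_{i=s+1}^n (ik+1)·ε_i (for 1 ≤ s ≤ n and k ∈ ℕ), the Weyl dimension product ∏_{α∈Φ⁺}(λ_s+ρ,α)/(ρ,α) equals C(2n, n-s)·(k+1)^{n²-n}. -/

import Mathlib

/-- Weyl dimension product for the root system `B_n` with positive roots
`{ε_i, ε_j ± ε_i}` and `ρ = (1/2)∑(2i-1)ε_i`, evaluated at the weight `∑ ν_i ε_i`: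
`∏_{α∈Φ⁺}(ν+ρ,α)/(ρ,α)`. -/
noncomputable def dimB (n : ℕ) (ν : ℕ → ℚ) : ℚ :=
  (∏ p ∈ (Finset.Icc 1 n ×ˢ Finset.Icc 1 n).filter (fun p => p.1 < p.2),
      (((ν p.2 + (p.2 : ℚ) - 1/2) - (ν p.1 + (p.1 : ℚ) - 1/2)) *
        ((ν p.2 + (p.2 : ℚ) - 1/2) + (ν p.1 + (p.1 : ℚ) - 1/2))) /
      ((((p.2 : ℚ) - 1/2) - ((p.1 : ℚ) - 1/2)) *
        (((p.2 : ℚ) - 1/2) + ((p.1 : ℚ) - 1/2)))) *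
  ∏ i ∈ Finset.Icc 1 n, (ν i + (i : ℚ) - 1/2) / ((i : ℚ) - 1/2)

/-- Weyl dimension product for the root system `D_n` with positive roots
`{ε_j ± ε_i : i < j}` and `ρ = ∑(i-1)ε_i`, evaluated at the weight `∑ ν_i ε_i`. -/
noncomputable def dimD (n : ℕ) (ν : ℕ → ℚ) : ℚ :=
  ∏ p ∈ (Finset.Icc 1 n ×ˢ Finset.Icc 1 n).filter (fun p => p.1 < p.2),
      (((ν p.2 + (p.2 : ℚ) - 1) - (ν p.1 + (p.1 : ℚ) - 1)) *
        ((ν p.2 + (p.2 : ℚ) - 1) + (ν p.1 + (p.1 : ℚ) - 1))) /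
      ((((p.2 : ℚ)) - (p.1 : ℚ)) * (((p.2 : ℚ) - 1) + ((p.1 : ℚ) - 1)))

open Finset

lemma telescope (f : ℕ → ℚ) (a b : ℕ) (hab : a ≤ b) (hf : ∀ i, a ≤ i → i ≤ b → f i ≠ 0) :
    ∏ i ∈ Finset.Ioc a b, (f i / f (i-1)) = f b / f a := by
  induction b, hab using Nat.le_induction with
  | base => simp [div_self (hf a le_rfl le_rfl)]
  | succ b hab ih =>
    rw [Finset.prod_Ioc_succ_top hab,
      ih (fun i h1 h2 => hf i h1 (le_trans h2 (Nat.le_succ b)))]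
    have h1 : f b ≠ 0 := hf b hab (Nat.le_succ b)
    have h2 : f a ≠ 0 := hf a le_rfl (Nat.le_succ_of_le hab)
    simp only [Nat.add_sub_cancel]
    field_simp

lemma dimD_eq (n : ℕ) (ν : ℕ → ℚ) :
    dimD n ν = ∏ j ∈ Finset.Icc 1 n, ∏ i ∈ Finset.Ico 1 j,
      (((ν j + (j : ℚ) - 1) - (ν i + (i : ℚ) - 1)) *
        ((ν j + (j : ℚ) - 1) + (ν i + (i : ℚ) - 1))) /
      ((((j : ℚ)) - (i : ℚ)) * (((j : ℚ) - 1) + ((i : ℚ) - 1))) := by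
  rw [dimD, Finset.prod_filter, Finset.prod_product_right]
  refine Finset.prod_congr rfl (fun j hj => ?_)
  rw [← Finset.prod_filter]
  refine Finset.prod_congr ?_ (fun i _ => rfl)
  ext i
  simp only [Finset.mem_filter, Finset.mem_Icc, Finset.mem_Ico]
  simp only [Finset.mem_Icc] at hj
  omega

noncomputable def νw (s k : ℕ) : ℕ → ℚ := fun i => if i ≤ s then ((i : ℚ) - 1) * k else (i : ℚ) * k + 1

set_option maxHeartbeats 1600000 in
lemma col (n s k : ℕ) (hs1 : 1 ≤ s) (hsn : s ≤ n) :
    ∏ i ∈ Finset.Ico 1 (n+1),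
      (((νw s k (n+1) + ((n+1 : ℕ) : ℚ) - 1) - (νw s k i + (i : ℚ) - 1)) *
        ((νw s k (n+1) + ((n+1 : ℕ) : ℚ) - 1) + (νw s k i + (i : ℚ) - 1))) /
      ((((n+1 : ℕ) : ℚ) - (i : ℚ)) * ((((n+1 : ℕ) : ℚ) - 1) + ((i : ℚ) - 1)))
    = (2*(n:ℚ)+1) * (2*(n:ℚ)+2) * ((k:ℚ)+1)^(2*n) /
        ((((n:ℚ)+1) - (s:ℚ)) * (((n:ℚ)+1) + (s:ℚ))) := by
  have hns : (s:ℚ) ≤ (n:ℚ) := by exact_mod_cast hsn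
  have hn1 : (1:ℚ) ≤ (n:ℚ) := by exact_mod_cast hs1.trans hsn
  have hnu : νw s k (n+1) + ((n+1 : ℕ) : ℚ) - 1 = ((n:ℚ)+1) * ((k:ℚ)+1) := by
    have : ¬ (n+1 ≤ s) := by omega
    simp only [νw, if_neg this]
    push_cast; ring
  set v : ℕ → ℚ := fun i => ((n:ℚ)+i)/((n:ℚ)+1-i) with hv
  set w : ℕ → ℚ := fun i => ((n:ℚ)+i)*((n:ℚ)+i+1) with hw
  have hden : ∀ i : ℕ, i ≤ n → ((n:ℚ)+1-i) ≠ 0 := by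
    intro i hi
    have : (i:ℚ) ≤ n := by exact_mod_cast hi
    exact ne_of_gt (by nlinarith)
  have hnum : ∀ i : ℕ, ((n:ℚ)+i) ≠ 0 := by
    intro i; have : (0:ℚ) ≤ (i:ℚ) := by positivity
    exact ne_of_gt (by nlinarith)
  have hvne : ∀ i, 0 ≤ i → i ≤ s → v i ≠ 0 := by
    intro i _ hi
    exact div_ne_zero (hnum i) (hden i (hi.trans hsn))
  have hwne : ∀ i, s ≤ i → i ≤ n → w i ≠ 0 := by
    intro i _ _
    refine mul_ne_zero (hnum i) ?_
    have : (0:ℚ) ≤ (i:ℚ) := by positivity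
    exact ne_of_gt (by nlinarith)
  have h1 : Finset.Ico 1 (n+1) = Finset.Ioc 0 n := by ext x; simp; omega
  rw [h1, ← Finset.prod_Ioc_consecutive _ (Nat.zero_le s) hsn]
  have e1 : ∀ i ∈ Finset.Ioc 0 s,
      (((νw s k (n+1) + ((n+1 : ℕ) : ℚ) - 1) - (νw s k i + (i : ℚ) - 1)) *
        ((νw s k (n+1) + ((n+1 : ℕ) : ℚ) - 1) + (νw s k i + (i : ℚ) - 1))) /
      ((((n+1 : ℕ) : ℚ) - (i : ℚ)) * ((((n+1 : ℕ) : ℚ) - 1) + ((i : ℚ) - 1)))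
      = ((k:ℚ)+1)^2 * (v i / v (i-1)) := by
    intro i hi
    simp only [Finset.mem_Ioc] at hi
    have hi1 : 1 ≤ i := hi.1
    have his : i ≤ s := hi.2
    have hiq : (1:ℚ) ≤ (i:ℚ) := by exact_mod_cast hi1
    have hisq : (i:ℚ) ≤ (s:ℚ) := by exact_mod_cast his
    have hniv : νw s k i = ((i:ℚ)-1) * k := by simp [νw, his]
    have hic : ((i-1 : ℕ) : ℚ) = (i:ℚ) - 1 := by
      push_cast [Nat.cast_sub hi1]; ring
    rw [hnu, hniv, hv]
    simp only [hic]
    have d1 : ((n:ℚ)+1-(i:ℚ)) ≠ 0 := ne_of_gt (by nlinarith)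
    have d2 : ((n:ℚ)+(i:ℚ)-1) ≠ 0 := ne_of_gt (by nlinarith)
    have d3 : ((n:ℚ)+1-((i:ℚ)-1)) ≠ 0 := ne_of_gt (by nlinarith)
    have d4 : ((n:ℚ)+((i:ℚ)-1)) ≠ 0 := ne_of_gt (by nlinarith)
    push_cast
    have d7 : ((n:ℚ)+1-1+((i:ℚ)-1)) ≠ 0 := ne_of_gt (by nlinarith)
    field_simp
    ring
  have e2 : ∀ i ∈ Finset.Ioc s n,
      (((νw s k (n+1) + ((n+1 : ℕ) : ℚ) - 1) - (νw s k i + (i : ℚ) - 1)) *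
        ((νw s k (n+1) + ((n+1 : ℕ) : ℚ) - 1) + (νw s k i + (i : ℚ) - 1))) /
      ((((n+1 : ℕ) : ℚ) - (i : ℚ)) * ((((n+1 : ℕ) : ℚ) - 1) + ((i : ℚ) - 1)))
      = ((k:ℚ)+1)^2 * (w i / w (i-1)) := by
    intro i hi
    simp only [Finset.mem_Ioc] at hi
    have hi1 : 1 ≤ i := hs1.trans (Nat.le_of_lt hi.1)
    have hin : i ≤ n := hi.2
    have hiq : (1:ℚ) ≤ (i:ℚ) := by exact_mod_cast hi1
    have hinq : (i:ℚ) ≤ (n:ℚ) := by exact_mod_cast hin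
    have hniv : νw s k i = (i:ℚ) * k + 1 := by
      have : ¬ (i ≤ s) := by omega
      simp [νw, this]
    have hic : ((i-1 : ℕ) : ℚ) = (i:ℚ) - 1 := by
      push_cast [Nat.cast_sub hi1]; ring
    rw [hnu, hniv, hw]
    simp only [hic]
    have d1 : ((n:ℚ)+1-(i:ℚ)) ≠ 0 := ne_of_gt (by nlinarith)
    have d2 : ((n:ℚ)+(i:ℚ)-1) ≠ 0 := ne_of_gt (by nlinarith)
    have d4 : ((n:ℚ)+((i:ℚ)-1)) ≠ 0 := ne_of_gt (by nlinarith)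
    have d5 : ((n:ℚ)+(i:ℚ)) ≠ 0 := ne_of_gt (by nlinarith)
    have d6 : ((n:ℚ)+((i:ℚ)-1)+1) ≠ 0 := ne_of_gt (by nlinarith)
    push_cast
    have d7 : ((n:ℚ)+1-1+((i:ℚ)-1)) ≠ 0 := ne_of_gt (by nlinarith)
    field_simp
    ring
  rw [Finset.prod_congr rfl e1, Finset.prod_congr rfl e2,
    Finset.prod_mul_distrib, Finset.prod_mul_distrib, Finset.prod_const, Finset.prod_const,
    telescope v 0 s (Nat.zero_le s) (fun i h1 h2 => hvne i h1 h2),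
    telescope w s n hsn (fun i h1 h2 => hwne i h1 h2),
    Nat.card_Ioc, Nat.card_Ioc]
  have hpow : (((k:ℚ)+1)^2)^(s-0) * (((k:ℚ)+1)^2)^(n-s) = ((k:ℚ)+1)^(2*n) := by
    rw [← pow_add, ← pow_mul]
    congr 1
    omega
  have hv0 : v 0 = (n:ℚ)/((n:ℚ)+1) := by simp [hv]
  have hvs : v s = ((n:ℚ)+s)/((n:ℚ)+1-s) := by simp [hv]
  have hws : w s = ((n:ℚ)+s)*((n:ℚ)+s+1) := by simp [hw]
  have hwn : w n = ((n:ℚ)+n)*((n:ℚ)+n+1) := by simp [hw]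
  rw [hv0, hvs, hws, hwn]
  have d1 : ((n:ℚ)+1-(s:ℚ)) ≠ 0 := ne_of_gt (by nlinarith)
  have d2 : ((n:ℚ)) ≠ 0 := ne_of_gt (by nlinarith)
  have d3 : ((n:ℚ)+1) ≠ 0 := ne_of_gt (by nlinarith)
  have d4 : ((n:ℚ)+s) ≠ 0 := ne_of_gt (by nlinarith)
  have d5 : ((n:ℚ)+s+1) ≠ 0 := ne_of_gt (by nlinarith)
  have d6 : ((n:ℚ)+1+(s:ℚ)) ≠ 0 := ne_of_gt (by nlinarith)
  calc (((k:ℚ)+1)^2)^(s-0) * (((n:ℚ)+s)/((n:ℚ)+1-s) / ((n:ℚ)/((n:ℚ)+1))) *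
        ((((k:ℚ)+1)^2)^(n-s) * (((n:ℚ)+n)*((n:ℚ)+n+1) / (((n:ℚ)+s)*((n:ℚ)+s+1))))
      = (((k:ℚ)+1)^2)^(s-0) * (((k:ℚ)+1)^2)^(n-s) *
        ((((n:ℚ)+s)/((n:ℚ)+1-s) / ((n:ℚ)/((n:ℚ)+1))) *
         (((n:ℚ)+n)*((n:ℚ)+n+1) / (((n:ℚ)+s)*((n:ℚ)+s+1)))) := by ring
    _ = ((k:ℚ)+1)^(2*n) * ((2*(n:ℚ)+1) * (2*(n:ℚ)+2) / ((((n:ℚ)+1) - s) * (((n:ℚ)+1) + s))) := by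
        rw [hpow]
        congr 1
        field_simp
        ring
    _ = (2*(n:ℚ)+1) * (2*(n:ℚ)+2) * ((k:ℚ)+1)^(2*n) /
        ((((n:ℚ)+1) - (s:ℚ)) * (((n:ℚ)+1) + (s:ℚ))) := by ring

lemma sum2 : ∀ s : ℕ, 2 * (∑ j ∈ Finset.Icc 1 s, (j-1)) = s^2 - s := by
  intro s
  induction s with
  | zero => simp
  | succ s ih =>
    rw [Finset.sum_Icc_succ_top (Nat.le_add_left 1 s)]
    have h1 : s ≤ s^2 := Nat.le_self_pow two_ne_zero s
    have h2 : (s+1)^2 = s^2 + 2*s + 1 := by ring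
    omega

lemma main (s k : ℕ) (hs1 : 1 ≤ s) : ∀ n, s ≤ n →
    ∏ j ∈ Finset.Icc 1 n, ∏ i ∈ Finset.Ico 1 j,
      (((νw s k j + (j : ℚ) - 1) - (νw s k i + (i : ℚ) - 1)) *
        ((νw s k j + (j : ℚ) - 1) + (νw s k i + (i : ℚ) - 1))) /
      (((j : ℚ) - (i : ℚ)) * (((j : ℚ) - 1) + ((i : ℚ) - 1)))
      = (Nat.choose (2*n) (n-s) : ℚ) * ((k:ℚ)+1)^(n^2-n) := by
  intro n hn
  induction n, hn using Nat.le_induction with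
  | base =>
    have hterm : ∀ j ∈ Finset.Icc 1 s, ∀ i ∈ Finset.Ico 1 j,
        (((νw s k j + (j : ℚ) - 1) - (νw s k i + (i : ℚ) - 1)) *
          ((νw s k j + (j : ℚ) - 1) + (νw s k i + (i : ℚ) - 1))) /
        (((j : ℚ) - (i : ℚ)) * (((j : ℚ) - 1) + ((i : ℚ) - 1)))
        = ((k:ℚ)+1)^2 := by
      intro j hj i hi
      simp only [Finset.mem_Icc, Finset.mem_Ico] at hj hi
      have hij : i < j := hi.2
      have hi1 : 1 ≤ i := hi.1
      have hjs : j ≤ s := hj.2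
      have hvj : νw s k j = ((j:ℚ)-1) * k := by simp [νw, hjs]
      have hvi : νw s k i = ((i:ℚ)-1) * k := by simp [νw, le_trans (le_of_lt hij) hjs]
      have hijq : (i:ℚ) < (j:ℚ) := by exact_mod_cast hij
      have hiq : (1:ℚ) ≤ (i:ℚ) := by exact_mod_cast hi1
      have d1 : (j:ℚ) - (i:ℚ) ≠ 0 := ne_of_gt (by nlinarith)
      have d2 : ((j:ℚ) - 1) + ((i:ℚ) - 1) ≠ 0 := ne_of_gt (by nlinarith)
      rw [hvj, hvi]
      field_simp
      ring
    rw [Finset.prod_congr rfl (fun j hj => Finset.prod_congr rfl (fun i hi => hterm j hj i hi))]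
    simp only [Finset.prod_const, Nat.card_Ico]
    rw [Finset.prod_pow_eq_pow_sum, ← pow_mul]
    rw [Nat.sub_self, Nat.choose_zero_right]
    rw [show 2 * ∑ j ∈ Finset.Icc 1 s, (j-1) = s^2 - s from sum2 s]
    simp
  | succ n hn ih =>
    rw [Finset.prod_Icc_succ_top (by omega : 1 ≤ n + 1), ih, col n s k hs1 hn]
    have hr : ((n-s : ℕ) : ℚ) = (n:ℚ) - (s:ℚ) := Nat.cast_sub hn
    have c1 := Nat.choose_succ_right_eq (2*n+2) (n-s)
    have c2 := Nat.choose_mul_succ_eq (2*n+1) (n-s)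
    have c3 := Nat.choose_mul_succ_eq (2*n) (n-s)
    rw [show 2*n+2 - (n-s) = n+s+2 from by omega] at c1
    rw [show 2*n+1+1 = 2*n+2 from by omega, show 2*n+2 - (n-s) = n+s+2 from by omega] at c2
    rw [show 2*n+1 - (n-s) = n+s+1 from by omega] at c3
    have c1q : (Nat.choose (2*n+2) (n-s+1) : ℚ) * ((n:ℚ) - s + 1)
        = (Nat.choose (2*n+2) (n-s) : ℚ) * ((n:ℚ)+s+2) := by
      have := congrArg (Nat.cast : ℕ → ℚ) c1
      push_cast at this
      rw [hr] at this
      linarith [this]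
    have c2q : (Nat.choose (2*n+1) (n-s) : ℚ) * (2*(n:ℚ)+2)
        = (Nat.choose (2*n+2) (n-s) : ℚ) * ((n:ℚ)+s+2) := by
      have := congrArg (Nat.cast : ℕ → ℚ) c2
      push_cast at this
      linarith [this]
    have c3q : (Nat.choose (2*n) (n-s) : ℚ) * (2*(n:ℚ)+1)
        = (Nat.choose (2*n+1) (n-s) : ℚ) * ((n:ℚ)+s+1) := by
      have := congrArg (Nat.cast : ℕ → ℚ) c3
      push_cast at this
      linarith [this]
    have key : (Nat.choose (2*n+2) (n-s+1) : ℚ) * (((n:ℚ) - s + 1)*((n:ℚ)+s+1))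
        = (Nat.choose (2*n) (n-s) : ℚ) * ((2*(n:ℚ)+1)*(2*(n:ℚ)+2)) := by
      linear_combination ((n:ℚ)+(s:ℚ)+1)*c1q - ((n:ℚ)+(s:ℚ)+1)*c2q - (2*(n:ℚ)+2)*c3q
    have hexp : (n+1)^2 - (n+1) = (n^2 - n) + 2*n := by
      have h1 : n ≤ n^2 := Nat.le_self_pow two_ne_zero n
      have h2 : (n+1)^2 = n^2 + 2*n + 1 := by ring
      omega
    rw [show 2*(n+1) = 2*n+2 from by ring, show n+1-s = n-s+1 from by omega, hexp, pow_add]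
    have hsq : (s:ℚ) ≤ (n:ℚ) := by exact_mod_cast hn
    have d1 : ((n:ℚ)+1) - (s:ℚ) ≠ 0 := ne_of_gt (by nlinarith)
    have d2 : ((n:ℚ)+1) + (s:ℚ) ≠ 0 := ne_of_gt (by positivity)
    field_simp
    linear_combination (-1:ℚ) * key

/-- For `D_n`, the weight `λ_s = ∑_{i≤s}(i-1)k ε_i + ∑_{i>s}(ik+1) ε_i`
has Weyl dimension product `C(2n, n-s)(k+1)^{n²-n}`. -/
theorem weyl_dim_Dn_steinberg_intermediate (n s k : ℕ) (hs1 : 1 ≤ s) (hs : s ≤ n) :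
    dimD n (fun i => if i ≤ s then ((i : ℚ) - 1) * k else (i : ℚ) * k + 1) =
      (Nat.choose (2 * n) (n - s) : ℚ) * ((k : ℚ) + 1) ^ (n ^ 2 - n) := by
  rw [show (fun i => if i ≤ s then ((i : ℚ) - 1) * k else (i : ℚ) * k + 1) = νw s k from rfl,
    dimD_eq]
  exact main s k hs1 n hs
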